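/- Let G_• be a filtration of length d on a nilpotent finite-dimensional real Lie group G, and let Γ ≤ G be a discrete subgroup with G/Γ compact such that G_• is Γ-rational. Then a map f̄ : 𝓕∅ → G/Γ is polynomial (i.e. f̄ = π ∘ f for some f polynomial with respect to G_•, π : G → G/Γ the quotient map) if and only if for every k ≥ 1 and every parallelepiped (α_ω)_{ω ∈ {0,1}^k} in 𝓕∅, the cube (f̄(α_ω))_{ω} lies in the image of HK^k(G_•) under the coordinatewise projection G^{{0,1}^k} → (G/Γ)^{{0,1}^k}. -/

import Mathlib

/-- Auxiliary definition of polynomial maps `𝓕∅ → G` with respect to a prefiltration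
`G_•` (given as a sequence of subgroups of an ambient group), with recursion depth `n`:
at depth `0` the prefiltration must be trivial and the map constantly `1`; at depth
`n + 1` the map takes values in `G_0` and all its discrete derivatives
`D_β f (α) = f(α)⁻¹ · f(α ∪ β)` (for `β` non-empty and `α` disjoint from `β`) agree with
maps that are polynomial of depth `n` with respect to the shifted prefiltration `G_{•+1}`. -/
def PolyAux {G : Type*} [Group G] : ℕ → (ℕ → Subgroup G) → (Finset ℕ → G) → Prop
  | 0, Gs, f => Gs 0 = ⊥ ∧ ∀ α : Finset ℕ, f α = 1
  | n + 1, Gs, f => (∀ α : Finset ℕ, f α ∈ Gs 0) ∧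
      ∀ β : Finset ℕ, β.Nonempty →
        ∃ Df : Finset ℕ → G, PolyAux n (fun i => Gs (i + 1)) Df ∧
          ∀ α : Finset ℕ, Disjoint α β → Df α = (f α)⁻¹ * f (α ∪ β)

/-- `f ∈ poly(𝓕∅ → G_•)`: `f` is polynomial with respect to the (terminating)
prefiltration `G_•`. -/
def IsPolySeq {G : Type*} [Group G] (Gs : ℕ → Subgroup G) (f : Finset ℕ → G) : Prop :=
  ∃ n : ℕ, PolyAux n Gs f

/-- `f ∈ poly(𝓕∅ → G_•/Γ)`: `f = π ∘ g` for some `g ∈ poly(𝓕∅ → G_•)`, where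
`π : G → G/Γ` is the quotient map. -/
def IsPolyQuot {G : Type*} [Group G] (Gs : ℕ → Subgroup G) (Γ : Subgroup G)
    (f : Finset ℕ → G ⧸ Γ) : Prop :=
  ∃ g : Finset ℕ → G, IsPolySeq Gs g ∧ ∀ α : Finset ℕ, f α = QuotientGroup.mk (g α)

/-- The number of coordinates of `ω ∈ {0,1}^k` equal to `1`. -/
def cubeWeight {k : ℕ} (ω : Fin k → Bool) : ℕ :=
  (Finset.univ.filter fun i => ω i = true).card

/-- The Host–Kra cube group `HK^k(G_•)`: the subgroup of `G^{{0,1}^k}` generated by the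
upper-face elements `g^{[ω]}` (equal to `g` on `{σ : σ ≥ ω}` and `1` elsewhere) with
`g ∈ G_{|ω|}`. -/
def HKGroup {G : Type*} [Group G] (k : ℕ) (Gs : ℕ → Subgroup G) :
    Subgroup ((Fin k → Bool) → G) :=
  Subgroup.closure {x | ∃ (ω : Fin k → Bool) (g : G), g ∈ Gs (cubeWeight ω) ∧
    x = fun σ => if ∀ i, ω i ≤ σ i then g else 1}

/-- Parallelepipeds in `𝓕∅`: families `(α_ω)_{ω ∈ {0,1}^k}` with
`α_ω = α_0 ∪ ⋃_{i : ω_i = 1} α_i` for pairwise disjoint finite sets `α_0, α_1, …, α_k`. -/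
def IsParallelepiped (k : ℕ) (A : (Fin k → Bool) → Finset ℕ) : Prop :=
  ∃ (a : Finset ℕ) (b : Fin k → Finset ℕ),
    (∀ i, Disjoint a (b i)) ∧ (Pairwise fun i j => Disjoint (b i) (b j)) ∧
    ∀ ω : Fin k → Bool, A ω = a ∪ (Finset.univ.filter fun i => ω i = true).biUnion b

namespace S6

open scoped commutatorElement

variable {G : Type*} [Group G]

/-- shifted filtration -/
def sh (Gs : ℕ → Subgroup G) : ℕ → Subgroup G := fun i => Gs (i + 1)

theorem sh_anti {Gs : ℕ → Subgroup G} (h : Antitone Gs) : Antitone (sh Gs) :=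
  fun _ _ hij => h (by omega)

theorem sh_comm {Gs : ℕ → Subgroup G} (ha : Antitone Gs)
    (h : ∀ i j, ⁅Gs i, Gs j⁆ ≤ Gs (i + j)) :
    ∀ i j, ⁅sh Gs i, sh Gs j⁆ ≤ sh Gs (i + j) := fun i j =>
  le_trans (h (i+1) (j+1)) (ha (by omega))

def genCube {k : ℕ} (ω : Fin k → Bool) (g : G) : (Fin k → Bool) → G :=
  fun σ => if ∀ i, ω i ≤ σ i then g else 1

theorem genCube_mem {k : ℕ} {Gs : ℕ → Subgroup G} {ω : Fin k → Bool} {g : G}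
    (hg : g ∈ Gs (cubeWeight ω)) : genCube ω g ∈ HKGroup k Gs :=
  Subgroup.subset_closure ⟨ω, g, hg, rfl⟩

theorem genCube_mem' {k : ℕ} {Gs : ℕ → Subgroup G} (ha : Antitone Gs) {ω : Fin k → Bool} {g : G}
    {m : ℕ} (hg : g ∈ Gs m) (hw : cubeWeight ω ≤ m) : genCube ω g ∈ HKGroup k Gs :=
  genCube_mem (ha hw hg)

theorem genCube_inv {k : ℕ} (ω : Fin k → Bool) (g : G) :
    (genCube ω g)⁻¹ = genCube ω g⁻¹ := by
  funext σ
  simp only [genCube, Pi.inv_apply]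
  split <;> simp

theorem coord_mem {k : ℕ} {Gs : ℕ → Subgroup G} (ha : Antitone Gs)
    {c : (Fin k → Bool) → G} (hc : c ∈ HKGroup k Gs) (σ : Fin k → Bool) :
    c σ ∈ Gs 0 := by
  have : HKGroup k Gs ≤ Subgroup.pi Set.univ (fun _ => Gs 0) := by
    rw [HKGroup, Subgroup.closure_le]
    rintro x ⟨ω, g, hg, rfl⟩
    intro τ _
    by_cases h : ∀ i, ω i ≤ τ i
    · simpa [h] using ha (Nat.zero_le _) hg
    · simp [h, Subgroup.one_mem]
  exact this hc σ trivial

theorem cubeWeight_sup_le {k : ℕ} (ω τ : Fin k → Bool) :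
    cubeWeight (fun i => ω i || τ i) ≤ cubeWeight ω + cubeWeight τ := by
  unfold cubeWeight
  refine le_trans (Finset.card_le_card ?_) (Finset.card_union_le _ _)
  intro i hi
  simp only [Finset.mem_filter, Finset.mem_union, Finset.mem_univ, true_and,
    Bool.or_eq_true] at *
  exact hi

theorem bool_or_le {a b c : Bool} (h1 : a ≤ c) (h2 : b ≤ c) : (a || b) ≤ c := by
  revert h1 h2; cases a <;> cases b <;> cases c <;> decide

theorem bool_le_of_or_left {a b c : Bool} (h : (a || b) ≤ c) : a ≤ c := by
  revert h; cases a <;> cases b <;> cases c <;> decide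

theorem bool_le_of_or_right {a b c : Bool} (h : (a || b) ≤ c) : b ≤ c := by
  revert h; cases a <;> cases b <;> cases c <;> decide

theorem conj_genCube {k : ℕ} (ω τ : Fin k → Bool) (g h : G) :
    genCube ω g * genCube τ h * (genCube ω g)⁻¹ =
      genCube (fun i => ω i || τ i) ⁅g, h⁆ * genCube τ h := by
  funext σ
  simp only [genCube, Pi.mul_apply, Pi.inv_apply, commutatorElement_def]
  by_cases hω : ∀ i, ω i ≤ σ i <;> by_cases hτ : ∀ i, τ i ≤ σ i
  · have hsup : ∀ i, (ω i || τ i) ≤ σ i := fun i => bool_or_le (hω i) (hτ i)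
    simp [hω, hτ, hsup]
  · have hsup : ¬ ∀ i, (ω i || τ i) ≤ σ i := fun hs => hτ fun i => bool_le_of_or_right (hs i)
    simp [hω, hτ, hsup]
  · have hsup : ¬ ∀ i, (ω i || τ i) ≤ σ i := fun hs => hω fun i => bool_le_of_or_left (hs i)
    simp [hω, hτ, hsup]
  · have hsup : ¬ ∀ i, (ω i || τ i) ≤ σ i := fun hs => hω fun i => bool_le_of_or_left (hs i)
    simp [hω, hτ, hsup]

theorem conj_mem_shift {k : ℕ} {Gs : ℕ → Subgroup G} (ha : Antitone Gs)
    (hc : ∀ i j, ⁅Gs i, Gs j⁆ ≤ Gs (i + j))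
    {x y : (Fin k → Bool) → G} (hx : x ∈ HKGroup k Gs) (hy : y ∈ HKGroup k (sh Gs)) :
    x * y * x⁻¹ ∈ HKGroup k (sh Gs) := by
  have key : ∀ (ω : Fin k → Bool) (g : G), g ∈ Gs (cubeWeight ω) →
      ∀ z ∈ HKGroup k (sh Gs), genCube ω g * z * (genCube ω g)⁻¹ ∈ HKGroup k (sh Gs) := by
    intro ω g hg z hz
    induction hz using Subgroup.closure_induction with
    | mem w hw =>
      obtain ⟨τ, h, hh, rfl⟩ := hw
      show genCube ω g * genCube τ h * (genCube ω g)⁻¹ ∈ HKGroup k (sh Gs)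
      rw [conj_genCube ω τ g h]
      refine mul_mem ?_ (genCube_mem hh)
      refine genCube_mem' (sh_anti ha) ?_ (cubeWeight_sup_le ω τ)
      show ⁅g, h⁆ ∈ Gs (cubeWeight ω + cubeWeight τ + 1)
      have : ⁅g, h⁆ ∈ ⁅Gs (cubeWeight ω), Gs (cubeWeight τ + 1)⁆ :=
        Subgroup.commutator_mem_commutator hg hh
      exact ha (by omega) (hc _ _ this)
    | one => simpa using Subgroup.one_mem _
    | mul u v hu hv ihu ihv =>
      have : genCube ω g * (u * v) * (genCube ω g)⁻¹ =
          (genCube ω g * u * (genCube ω g)⁻¹) * (genCube ω g * v * (genCube ω g)⁻¹) := by group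
      rw [this]; exact mul_mem ihu ihv
    | inv u hu ihu =>
      have : genCube ω g * u⁻¹ * (genCube ω g)⁻¹ =
          (genCube ω g * u * (genCube ω g)⁻¹)⁻¹ := by group
      rw [this]; exact inv_mem ihu
  have main : ∀ x, x ∈ HKGroup k Gs →
      ∀ z ∈ HKGroup k (sh Gs), x * z * x⁻¹ ∈ HKGroup k (sh Gs) ∧
        x⁻¹ * z * x ∈ HKGroup k (sh Gs) := by
    intro x hx
    induction hx using Subgroup.closure_induction with
    | mem w hw =>
      obtain ⟨ω, g, hg, rfl⟩ := hw
      intro z hz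
      constructor
      · exact key ω g hg z hz
      · have h2 := key ω g⁻¹ (inv_mem hg) z hz
        rw [← genCube_inv] at h2
        simp only [inv_inv] at h2; exact h2
    | one =>
      intro z hz
      simp only [one_mul, mul_one, inv_one]
      exact ⟨hz, hz⟩
    | mul u v hu hv ihu ihv =>
      intro z hz
      constructor
      · have : u * v * z * (u * v)⁻¹ = u * (v * z * v⁻¹) * u⁻¹ := by group
        rw [this]; exact (ihu _ ((ihv z hz).1)).1
      · have : (u * v)⁻¹ * z * (u * v) = v⁻¹ * (u⁻¹ * z * u) * v := by group
        rw [this]; exact (ihv _ ((ihu z hz).2)).2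
    | inv u hu ihu =>
      intro z hz
      exact ⟨by simpa using (ihu z hz).2, by simpa using (ihu z hz).1⟩
  exact (main x hx y hy).1

theorem univ_fin_succ (k : ℕ) :
    (Finset.univ : Finset (Fin (k+1))) = insert (Fin.last k) (Finset.univ.image Fin.castSucc) := by
  ext i
  simp only [Finset.mem_insert, Finset.mem_image, Finset.mem_univ, true_and, true_iff]
  induction i using Fin.lastCases with
  | last => exact Or.inl rfl
  | cast j => exact Or.inr ⟨j, rfl⟩

theorem cubeWeight_snoc {k : ℕ} (ω : Fin k → Bool) (t : Bool) :
    cubeWeight (Fin.snoc ω t) = cubeWeight ω + (if t then 1 else 0) := by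
  unfold cubeWeight
  rw [univ_fin_succ, Finset.filter_insert, Finset.filter_image]
  have himg : ∀ s : Finset (Fin k), (s.image Fin.castSucc).card = s.card :=
    fun s => Finset.card_image_of_injective s (Fin.castSucc_injective k)
  have hne : ∀ x : Fin k, x.castSucc ≠ Fin.last k := fun x => (Fin.castSucc_lt_last x).ne
  by_cases ht : t = true
  · subst ht
    rw [if_pos (by simp [Fin.snoc_last])]
    rw [Finset.card_insert_of_notMem (by simp [hne])]
    simp [Fin.snoc_castSucc, himg]
  · have ht' : t = false := by simpa using ht
    subst ht'
    rw [if_neg (by simp [Fin.snoc_last])]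
    simp [Fin.snoc_castSucc, himg]

theorem forall_snoc_le {k : ℕ} (ω : Fin k → Bool) (t : Bool) (σ : Fin (k+1) → Bool) :
    (∀ i, (Fin.snoc ω t : Fin (k+1) → Bool) i ≤ σ i) ↔ ((∀ j, ω j ≤ σ (Fin.castSucc j)) ∧ t ≤ σ (Fin.last k)) := by
  constructor
  · intro h
    refine ⟨fun j => ?_, ?_⟩
    · have := h (Fin.castSucc j)
      simpa only [Fin.snoc_castSucc] using this
    · have := h (Fin.last k)
      simpa only [Fin.snoc_last] using this
  · rintro ⟨h1, h2⟩ i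
    induction i using Fin.lastCases with
    | last => simpa only [Fin.snoc_last] using h2
    | cast j => simpa only [Fin.snoc_castSucc] using h1 j

theorem genCube_snoc_apply {k : ℕ} (ω : Fin k → Bool) (t s : Bool) (g : G) (σ : Fin k → Bool) :
    genCube (Fin.snoc ω t) g (Fin.snoc σ s) =
      if ((∀ j, ω j ≤ σ j) ∧ t ≤ s) then g else 1 := by
  have h := forall_snoc_le ω t (Fin.snoc σ s)
  simp only [Fin.snoc_castSucc, Fin.snoc_last] at h
  simp only [genCube, h]

theorem face_split {k : ℕ} {Gs : ℕ → Subgroup G} (ha : Antitone Gs)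
    (hc : ∀ i j, ⁅Gs i, Gs j⁆ ≤ Gs (i + j))
    {c : (Fin (k+1) → Bool) → G} (hcube : c ∈ HKGroup (k+1) Gs) :
    (fun ω => c (Fin.snoc ω false)) ∈ HKGroup k Gs ∧
      (fun ω => (c (Fin.snoc ω false))⁻¹ * c (Fin.snoc ω true)) ∈ HKGroup k (sh Gs) := by
  induction hcube using Subgroup.closure_induction with
  | mem w hw =>
    obtain ⟨ω', g, hg, rfl⟩ := hw
    show (fun σ => genCube ω' g (Fin.snoc σ false)) ∈ _ ∧
      (fun σ => (genCube ω' g (Fin.snoc σ false))⁻¹ * genCube ω' g (Fin.snoc σ true)) ∈ _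
    cases htb : ω' (Fin.last k) with
    | false =>
      have hrep : ω' = Fin.snoc (Fin.init ω') false := by
        have := (Fin.snoc_init_self ω').symm
        rwa [htb] at this
      have hg' : g ∈ Gs (cubeWeight (Fin.init ω')) := by
        rw [hrep, cubeWeight_snoc] at hg
        simpa using hg
      constructor
      · have e0 : (fun σ => genCube ω' g (Fin.snoc σ false)) = genCube (Fin.init ω') g := by
          funext σ
          rw [hrep, genCube_snoc_apply]
          simp [genCube]
        rw [e0]; exact genCube_mem hg'
      · have e : (fun σ => (genCube ω' g (Fin.snoc σ false))⁻¹ * genCube ω' g (Fin.snoc σ true)) =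
            (1 : (Fin k → Bool) → G) := by
          funext σ
          rw [hrep, genCube_snoc_apply, genCube_snoc_apply]
          by_cases hσ : ∀ j, Fin.init ω' j ≤ σ j <;> simp [hσ]
        rw [e]; exact one_mem _
    | true =>
      have hrep : ω' = Fin.snoc (Fin.init ω') true := by
        have := (Fin.snoc_init_self ω').symm
        rwa [htb] at this
      have hg' : g ∈ Gs (cubeWeight (Fin.init ω') + 1) := by
        rw [hrep, cubeWeight_snoc] at hg
        simpa using hg
      constructor
      · have e0 : (fun σ => genCube ω' g (Fin.snoc σ false)) = (1 : (Fin k → Bool) → G) := by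
          funext σ
          rw [hrep, genCube_snoc_apply]
          simp
        rw [e0]; exact one_mem _
      · have e : (fun σ => (genCube ω' g (Fin.snoc σ false))⁻¹ * genCube ω' g (Fin.snoc σ true)) =
            genCube (Fin.init ω') g := by
          funext σ
          rw [hrep, genCube_snoc_apply, genCube_snoc_apply]
          by_cases hσ : ∀ j, Fin.init ω' j ≤ σ j <;> simp [genCube, hσ]
        rw [e]
        exact genCube_mem (Gs := sh Gs) hg'
  | one =>
    constructor
    · exact one_mem _
    · have h : (fun ω : Fin k → Bool => ((1 : (Fin (k+1) → Bool) → G) (Fin.snoc ω false))⁻¹ *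
          (1 : (Fin (k+1) → Bool) → G) (Fin.snoc ω true)) = 1 := by
        funext σ; simp
      rw [h]; exact one_mem _
  | mul u v hu hv ihu ihv =>
    obtain ⟨ihu0, ihu1⟩ := ihu
    obtain ⟨ihv0, ihv1⟩ := ihv
    constructor
    · have h : (fun ω : Fin k → Bool => (u * v) (Fin.snoc ω false)) =
          (fun ω => u (Fin.snoc ω false)) * (fun ω => v (Fin.snoc ω false)) := rfl
      rw [h]; exact mul_mem ihu0 ihv0
    · have h : (fun ω : Fin k → Bool => ((u * v) (Fin.snoc ω false))⁻¹ * (u * v) (Fin.snoc ω true)) =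
          ((fun ω => v (Fin.snoc ω false))⁻¹ *
            (fun ω => (u (Fin.snoc ω false))⁻¹ * u (Fin.snoc ω true)) *
            (fun ω => v (Fin.snoc ω false))) *
          (fun ω => (v (Fin.snoc ω false))⁻¹ * v (Fin.snoc ω true)) := by
        funext σ; simp only [Pi.mul_apply, Pi.inv_apply]; group
      rw [h]
      refine mul_mem ?_ ihv1
      have := conj_mem_shift ha hc (inv_mem ihv0) ihu1
      simpa using this
  | inv u hu ihu =>
    obtain ⟨ihu0, ihu1⟩ := ihu
    constructor
    · have h : (fun ω : Fin k → Bool => u⁻¹ (Fin.snoc ω false)) =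
          (fun ω => u (Fin.snoc ω false))⁻¹ := rfl
      rw [h]; exact inv_mem ihu0
    · have h : (fun ω : Fin k → Bool => (u⁻¹ (Fin.snoc ω false))⁻¹ * u⁻¹ (Fin.snoc ω true)) =
          (fun ω => u (Fin.snoc ω false)) *
            (fun ω => (u (Fin.snoc ω false))⁻¹ * u (Fin.snoc ω true))⁻¹ *
            (fun ω => u (Fin.snoc ω false))⁻¹ := by
        funext σ; simp only [Pi.mul_apply, Pi.inv_apply]; group
      rw [h]
      exact conj_mem_shift ha hc ihu0 (inv_mem ihu1)

theorem topCube {k : ℕ} : (fun (_ : Fin (k+1)) => true) = Fin.snoc (fun (_ : Fin k) => true) true := by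
  funext i
  induction i using Fin.lastCases with
  | last => simp only [Fin.snoc_last]
  | cast j => simp only [Fin.snoc_castSucc]

theorem corner {Γ : Subgroup G} : ∀ (k : ℕ) (Gs : ℕ → Subgroup G), Antitone Gs →
    (∀ i j, ⁅Gs i, Gs j⁆ ≤ Gs (i + j)) →
    ∀ y ∈ HKGroup k Gs, (∀ σ, σ ≠ (fun _ => true) → y σ ∈ Γ) →
    ∃ γ ∈ Γ, ∃ s ∈ Gs k, y (fun _ => true) = γ * s := by
  intro k
  induction k with
  | zero =>
    intro Gs ha hc y hy _
    exact ⟨1, one_mem _, y (fun _ => true), coord_mem ha hy _, (one_mul _).symm⟩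
  | succ k ih =>
    intro Gs ha hc y hy hΓ
    obtain ⟨h0, h1⟩ := face_split ha hc hy
    have hz := ih (sh Gs) (sh_anti ha) (sh_comm ha hc) _ h1 ?_
    · obtain ⟨γ, hγ, s, hs, hzs⟩ := hz
      have h0Γ : y (Fin.snoc (fun _ => true) false) ∈ Γ := by
        refine hΓ _ ?_
        intro hcontra
        have := congrFun hcontra (Fin.last k)
        rw [Fin.snoc_last] at this
        exact Bool.false_ne_true this
      refine ⟨y (Fin.snoc (fun _ => true) false) * γ, mul_mem h0Γ hγ, s, hs, ?_⟩
      have heq : (y (Fin.snoc (fun (_ : Fin k) => true) false))⁻¹ *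
          y (Fin.snoc (fun _ => true) true) = γ * s := hzs
      rw [topCube, mul_assoc, ← heq]
      group
    · intro σ hσ
      have hne : Fin.snoc σ true ≠ (fun _ => true) := by
        intro hcontra
        apply hσ
        funext j
        have := congrFun hcontra (Fin.castSucc j)
        rwa [Fin.snoc_castSucc] at this
      exact mul_mem (inv_mem (hΓ _ (by
        intro hcontra
        have := congrFun hcontra (Fin.last k)
        rw [Fin.snoc_last] at this
        exact Bool.false_ne_true this))) (hΓ _ hne)

theorem polyAux_val {n : ℕ} {Gs : ℕ → Subgroup G} {f : Finset ℕ → G}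
    (h : PolyAux n Gs f) (α : Finset ℕ) : f α ∈ Gs 0 := by
  cases n with
  | zero => rw [h.2 α]; exact one_mem _
  | succ n => exact h.1 α

theorem polyAux_one {Gs : ℕ → Subgroup G} (n : ℕ) (hbot : Gs n = ⊥) :
    PolyAux n Gs (fun _ => (1 : G)) := by
  induction n generalizing Gs with
  | zero => exact ⟨hbot, fun _ => rfl⟩
  | succ n ih =>
    refine ⟨fun _ => one_mem _, fun β hβ => ⟨fun _ => 1, ih hbot, fun α _ => by simp⟩⟩

theorem isPolySeq_deriv {Gs : ℕ → Subgroup G} (ha : Antitone Gs) {f : Finset ℕ → G}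
    (hf : IsPolySeq Gs f) {β : Finset ℕ} (hβ : β.Nonempty) :
    ∃ Df : Finset ℕ → G, IsPolySeq (sh Gs) Df ∧
      ∀ α, Disjoint α β → Df α = (f α)⁻¹ * f (α ∪ β) := by
  obtain ⟨n, hn⟩ := hf
  cases n with
  | zero =>
    refine ⟨fun _ => 1, ⟨0, polyAux_one 0 ?_, ⟩, fun α _ => by rw [hn.2, hn.2]; simp⟩
    have : Gs 1 ≤ Gs 0 := ha (by omega)
    rw [hn.1] at this
    exact le_bot_iff.mp this
  | succ n =>
    obtain ⟨Df, hDf, heq⟩ := hn.2 β hβ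
    exact ⟨Df, ⟨n, hDf⟩, heq⟩

theorem biUnion_split {k : ℕ} (σ : Fin (k+1) → Bool) (b : Fin (k+1) → Finset ℕ) :
    (Finset.univ.filter fun i => σ i = true).biUnion b =
      ((Finset.univ.filter fun j => σ (Fin.castSucc j) = true).biUnion
        fun j => b (Fin.castSucc j)) ∪ (if σ (Fin.last k) = true then b (Fin.last k) else ∅) := by
  ext x
  simp only [Finset.mem_biUnion, Finset.mem_filter, Finset.mem_union, Finset.mem_univ, true_and]
  constructor
  · rintro ⟨i, hi, hx⟩
    induction i using Fin.lastCases with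
    | last => exact Or.inr (by rw [if_pos hi]; exact hx)
    | cast j => exact Or.inl ⟨j, hi, hx⟩
  · rintro (⟨j, hj, hx⟩ | hx)
    · exact ⟨Fin.castSucc j, hj, hx⟩
    · by_cases hσ : σ (Fin.last k) = true
      · rw [if_pos hσ] at hx; exact ⟨Fin.last k, hσ, hx⟩
      · rw [if_neg hσ] at hx; exact absurd hx (Finset.notMem_empty x)

def emb0 (k : ℕ) : ((Fin k → Bool) → G) →* ((Fin (k+1) → Bool) → G) :=
  MonoidHom.mk' (fun x σ => x (fun j => σ (Fin.castSucc j))) (fun _ _ => rfl)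

def emb1 (k : ℕ) : ((Fin k → Bool) → G) →* ((Fin (k+1) → Bool) → G) :=
  MonoidHom.mk' (fun x σ => if σ (Fin.last k) = true then x (fun j => σ (Fin.castSucc j)) else 1)
    (fun a b => by
      funext σ
      by_cases h : σ (Fin.last k) = true <;> simp [h])

theorem emb0_genCube {k : ℕ} (ω : Fin k → Bool) (g : G) :
    emb0 k (genCube ω g) = genCube (Fin.snoc ω false) g := by
  funext σ
  show (if ∀ j, ω j ≤ σ (Fin.castSucc j) then g else 1) = _
  have h := forall_snoc_le ω false σ
  simp only [genCube, h, Bool.false_le, and_true]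

theorem emb1_genCube {k : ℕ} (ω : Fin k → Bool) (g : G) :
    emb1 k (genCube ω g) = genCube (Fin.snoc ω true) g := by
  funext σ
  show (if σ (Fin.last k) = true then (if ∀ j, ω j ≤ σ (Fin.castSucc j) then g else 1) else 1) = _
  have h := forall_snoc_le ω true σ
  simp only [genCube, h]
  by_cases h1 : σ (Fin.last k) = true
  · simp [h1]
  · have h2 : ¬ (true ≤ σ (Fin.last k)) := by
      cases hb : σ (Fin.last k)
      · decide
      · exact absurd hb h1
    simp only [h1, if_false]
    have hfalse : ¬((∀ j, ω j ≤ σ (Fin.castSucc j)) ∧ true ≤ false) := by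
      rintro ⟨-, hle⟩
      exact absurd hle (by decide)
    rw [if_neg hfalse]
    simp

theorem emb0_mem {k : ℕ} {Gs : ℕ → Subgroup G} {x : (Fin k → Bool) → G}
    (hx : x ∈ HKGroup k Gs) : emb0 k x ∈ HKGroup (k+1) Gs := by
  have hmap : Subgroup.map (emb0 k) (HKGroup k Gs) ≤ HKGroup (k+1) Gs := by
    rw [HKGroup, MonoidHom.map_closure, Subgroup.closure_le]
    rintro _ ⟨w, ⟨ω, g, hg, rfl⟩, rfl⟩
    show emb0 k (genCube ω g) ∈ _
    rw [emb0_genCube]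
    refine Subgroup.subset_closure ⟨Fin.snoc ω false, g, ?_, rfl⟩
    rwa [cubeWeight_snoc, if_neg (by decide), add_zero]
  exact hmap ⟨x, hx, rfl⟩

theorem emb1_mem {k : ℕ} {Gs : ℕ → Subgroup G} {y : (Fin k → Bool) → G}
    (hy : y ∈ HKGroup k (sh Gs)) : emb1 k y ∈ HKGroup (k+1) Gs := by
  have hmap : Subgroup.map (emb1 k) (HKGroup k (sh Gs)) ≤ HKGroup (k+1) Gs := by
    rw [HKGroup, MonoidHom.map_closure, Subgroup.closure_le]
    rintro _ ⟨w, ⟨ω, g, hg, rfl⟩, rfl⟩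
    show emb1 k (genCube ω g) ∈ _
    rw [emb1_genCube]
    refine Subgroup.subset_closure ⟨Fin.snoc ω true, g, ?_, rfl⟩
    rwa [cubeWeight_snoc, if_pos rfl]
  exact hmap ⟨y, hy, rfl⟩

theorem poly_cube_mem : ∀ (k : ℕ) (Gs : ℕ → Subgroup G), Antitone Gs →
    ∀ g : Finset ℕ → G, IsPolySeq Gs g →
    ∀ (a : Finset ℕ) (b : Fin k → Finset ℕ), (∀ i, Disjoint a (b i)) →
    (Pairwise fun i j => Disjoint (b i) (b j)) →
    (fun ω : Fin k → Bool => g (a ∪ (Finset.univ.filter fun i => ω i = true).biUnion b)) ∈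
      HKGroup k Gs := by
  intro k
  induction k with
  | zero =>
    intro Gs ha g hg a b _ _
    have he : (fun ω : Fin 0 → Bool =>
        g (a ∪ (Finset.univ.filter fun i => ω i = true).biUnion b)) =
        genCube (fun _ => false) (g (a ∪ (Finset.univ.filter fun i =>
          (fun _ : Fin 0 => false) i = true).biUnion b)) := by
      funext σ
      have hσ : σ = fun _ => false := by
        funext i
        exact i.elim0
      rw [hσ, genCube, if_pos (fun i => i.elim0)]
    rw [he]
    apply genCube_mem
    obtain ⟨n, hn⟩ := hg
    have h0 : cubeWeight (fun _ : Fin 0 => false) = 0 := rfl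
    rw [h0]
    exact polyAux_val hn _
  | succ k ih =>
    intro Gs ha g hg a b hab hbb
    have hab' : ∀ j : Fin k, Disjoint a (b (Fin.castSucc j)) := fun j => hab _
    have hbb' : Pairwise fun i j : Fin k => Disjoint (b (Fin.castSucc i)) (b (Fin.castSucc j)) :=
      fun i j hij => hbb (fun h => hij (Fin.castSucc_injective k h))
    have hx := ih Gs ha g hg a (fun j => b (Fin.castSucc j)) hab' hbb'
    rcases Finset.eq_empty_or_nonempty (b (Fin.last k)) with hemp | hne
    · have he : (fun σ : Fin (k+1) → Bool =>
          g (a ∪ (Finset.univ.filter fun i => σ i = true).biUnion b)) =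
          emb0 k (fun ω : Fin k → Bool =>
            g (a ∪ (Finset.univ.filter fun i => ω i = true).biUnion
              fun j => b (Fin.castSucc j))) := by
        funext σ
        show _ = g (a ∪ _)
        rw [biUnion_split σ b, hemp]
        have : (if σ (Fin.last k) = true then (∅ : Finset ℕ) else ∅) = ∅ := by
          split <;> rfl
        rw [this, Finset.union_empty]
      rw [he]
      exact emb0_mem hx
    · obtain ⟨Df, hDf, hDfeq⟩ := isPolySeq_deriv ha hg hne
      have hy := ih (sh Gs) (sh_anti ha) Df hDf a (fun j => b (Fin.castSucc j)) hab' hbb'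
      have hdisj : ∀ ω : Fin k → Bool,
          Disjoint (a ∪ (Finset.univ.filter fun i => ω i = true).biUnion
            fun j => b (Fin.castSucc j)) (b (Fin.last k)) := by
        intro ω
        refine Finset.disjoint_union_left.mpr ⟨hab _, ?_⟩
        refine Finset.disjoint_biUnion_left _ _ _ |>.mpr ?_
        intro j _
        exact hbb (fun h => absurd h (Fin.castSucc_lt_last j).ne)
      have he : (fun σ : Fin (k+1) → Bool =>
          g (a ∪ (Finset.univ.filter fun i => σ i = true).biUnion b)) =
          emb0 k (fun ω : Fin k → Bool =>
            g (a ∪ (Finset.univ.filter fun i => ω i = true).biUnion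
              fun j => b (Fin.castSucc j))) *
          emb1 k (fun ω : Fin k → Bool =>
            Df (a ∪ (Finset.univ.filter fun i => ω i = true).biUnion
              fun j => b (Fin.castSucc j))) := by
        funext σ
        show g _ = _ * (if σ (Fin.last k) = true then _ else 1)
        rw [biUnion_split σ b]
        by_cases hσl : σ (Fin.last k) = true
        · rw [if_pos hσl, if_pos hσl]
          have he0 : (emb0 k fun ω : Fin k → Bool =>
              g (a ∪ (Finset.univ.filter fun i => ω i = true).biUnion
                fun j => b (Fin.castSucc j))) σ =
              g (a ∪ (Finset.univ.filter fun j => σ (Fin.castSucc j) = true).biUnion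
                fun j => b (Fin.castSucc j)) := rfl
          rw [he0, hDfeq _ (hdisj _), ← Finset.union_assoc]
          group
        · rw [if_neg hσl, if_neg hσl, Finset.union_empty, mul_one]
          rfl
      rw [he]
      exact mul_mem (emb0_mem hx) (emb1_mem hy)

/-! ### Sorting machinery for coefficient products -/

def fkey (β : Finset ℕ) : Lex (ℕ × ℕ) := toLex (β.card, Encodable.encode β)

theorem fkey_injective : Function.Injective fkey := by
  intro a b h
  have h2 : (a.card, Encodable.encode a) = (b.card, Encodable.encode b) := by
    exact congrArg ofLex h
  exact Encodable.encode_injective (congrArg Prod.snd h2)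

def frel (β γ : Finset ℕ) : Prop := fkey β ≤ fkey γ

noncomputable instance : DecidableRel frel := fun _ _ => Classical.dec _

instance : IsTrans (Finset ℕ) frel := ⟨fun _ _ _ h1 h2 => le_trans h1 h2⟩

instance : IsTotal (Finset ℕ) frel := ⟨fun a b => le_total (fkey a) (fkey b)⟩

instance : IsAntisymm (Finset ℕ) frel :=
  ⟨fun a b h1 h2 => fkey_injective (le_antisymm h1 h2)⟩

theorem frel_of_ssubset {β γ : Finset ℕ} (h : β ⊂ γ) : frel β γ := by
  have hlt : β.card < γ.card := Finset.card_lt_card h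
  show fkey β ≤ fkey γ
  unfold fkey
  rw [Prod.Lex.le_iff]
  exact Or.inl hlt

/-- ordered product of coefficients over all subsets of `α` -/
noncomputable def Fc (g : Finset ℕ → G) (α : Finset ℕ) : G :=
  ((Finset.sort α.powerset frel).map g).prod

theorem sort_powerset_eq (α : Finset ℕ) :
    Finset.sort α.powerset frel = Finset.sort (α.powerset.erase α) frel ++ [α] := by
  refine (fun hp h1 h2 => List.Perm.eq_of_pairwise' h1 h2 hp) ?_ (Finset.pairwise_sort _ _) ?_
  · have h1 : List.Perm (Finset.sort α.powerset frel) α.powerset.toList :=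
      Finset.sort_perm_toList _ _
    have h2 : α.powerset = insert α (α.powerset.erase α) :=
      (Finset.insert_erase (Finset.mem_powerset_self α)).symm
    have h3 : List.Perm α.powerset.toList (α :: (α.powerset.erase α).toList) := by
      conv_lhs => rw [h2]
      exact Finset.toList_insert (Finset.notMem_erase _ _)
    have h4 : List.Perm (Finset.sort (α.powerset.erase α) frel ++ [α])
        (α :: Finset.sort (α.powerset.erase α) frel) := List.perm_append_singleton _ _
    have h5 : List.Perm ((α : Finset ℕ) :: Finset.sort (α.powerset.erase α) frel)
        (α :: (α.powerset.erase α).toList) := List.Perm.cons _ (Finset.sort_perm_toList _ _)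
    exact (h1.trans h3).trans ((h4.trans h5).symm)
  · rw [List.pairwise_append]
    refine ⟨Finset.pairwise_sort _ _, List.pairwise_singleton _ _, ?_⟩
    intro x hx y hy
    rw [List.mem_singleton] at hy
    subst hy
    rw [Finset.mem_sort] at hx
    obtain ⟨hne, hmem⟩ := Finset.mem_erase.mp hx
    exact frel_of_ssubset (lt_of_le_of_ne (Finset.mem_powerset.mp hmem) hne)

theorem Fc_erase (g : Finset ℕ → G) (α : Finset ℕ) :
    Fc g α = ((Finset.sort (α.powerset.erase α) frel).map g).prod * g α := by
  rw [Fc, sort_powerset_eq, List.map_append, List.prod_append]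
  simp

theorem Fc_congr {g g' : Finset ℕ → G} {α : Finset ℕ} (h : ∀ β ⊆ α, g β = g' β) :
    Fc g α = Fc g' α := by
  unfold Fc
  congr 1
  refine List.map_congr_left fun β hβ => ?_
  rw [Finset.mem_sort] at hβ
  exact h β (Finset.mem_powerset.mp hβ)

/-! ### coefficient cubes -/

theorem pi_prod_apply {ι : Type*} {H : Type*} [Monoid H] (l : List (ι → H)) (x : ι) :
    l.prod x = (l.map (fun f => f x)).prod := by
  induction l with
  | nil => rfl
  | cons f l ih => rw [List.prod_cons, List.map_cons, List.prod_cons, Pi.mul_apply, ih]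

theorem prod_map_ite (l : List (Finset ℕ)) (p : Finset ℕ → Prop) [DecidablePred p]
    (g : Finset ℕ → G) :
    (l.map fun β => if p β then g β else 1).prod =
      ((l.filter fun β => decide (p β)).map g).prod := by
  induction l with
  | nil => rfl
  | cons a l ih =>
    by_cases h : p a <;> simp [List.filter_cons, h, ih]

theorem sort_filter (s : Finset (Finset ℕ)) (p : Finset ℕ → Prop) [DecidablePred p] :
    (Finset.sort s frel).filter (fun β => decide (p β)) = Finset.sort (s.filter p) frel := by
  refine (fun hp h1 h2 => List.Perm.eq_of_pairwise' h1 h2 hp) ?_ ?_ (Finset.pairwise_sort _ _)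
  · have h1 : List.Perm ((Finset.sort s frel).filter (fun β => decide (p β)))
        (s.toList.filter (fun β => decide (p β))) :=
      List.Perm.filter _ (Finset.sort_perm_toList _ _)
    refine h1.trans ?_
    have h2 : (s.toList.filter (fun β => decide (p β)) : Multiset (Finset ℕ)) =
        ((s.filter p).toList : Multiset (Finset ℕ)) := by
      rw [Finset.coe_toList, ← Multiset.filter_coe p, Finset.coe_toList, Finset.filter_val]
    have h3 := Multiset.coe_eq_coe.mp h2
    exact h3.trans (Finset.sort_perm_toList _ _).symm
  · exact List.Pairwise.filter _ (Finset.pairwise_sort _ _)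

def omegaOf {k : ℕ} (b : Fin k → Finset ℕ) (β : Finset ℕ) : Fin k → Bool :=
  fun i => decide (β ∩ b i).Nonempty

theorem decide_le_iff (P : Prop) [Decidable P] (t : Bool) :
    (decide P ≤ t) ↔ (P → t = true) := by
  by_cases h : P <;> cases t <;> simp [h]

theorem weight_omegaOf {k : ℕ} {b : Fin k → Finset ℕ}
    (hbb : Pairwise fun i j => Disjoint (b i) (b j)) (β : Finset ℕ) :
    cubeWeight (omegaOf b β) ≤ β.card := by
  unfold cubeWeight
  classical
  refine Finset.card_le_card_of_injOn
    (fun i => if h : (β ∩ b i).Nonempty then h.choose else 0) ?_ ?_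
  · intro i hi
    simp only [Finset.coe_filter, Set.mem_setOf_eq] at hi
    have h : (β ∩ b i).Nonempty := by
      have := hi.2
      unfold omegaOf at this
      simpa using this
    dsimp only
    rw [dif_pos h]
    exact (Finset.mem_inter.mp h.choose_spec).1
  · intro i hi j hj hij
    simp only [Finset.coe_filter, Set.mem_setOf_eq] at hi hj
    have hi' : (β ∩ b i).Nonempty := by
      have := hi.2; unfold omegaOf at this; simpa using this
    have hj' : (β ∩ b j).Nonempty := by
      have := hj.2; unfold omegaOf at this; simpa using this
    dsimp only at hij
    rw [dif_pos hi', dif_pos hj'] at hij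
    by_contra hne
    have hxi := (Finset.mem_inter.mp hi'.choose_spec).2
    have hxj := (Finset.mem_inter.mp hj'.choose_spec).2
    rw [hij] at hxi
    exact Finset.disjoint_left.mp (hbb hne) hxi hxj

theorem powerset_filter_eq {k : ℕ} (a : Finset ℕ) (b : Fin k → Finset ℕ)
    (hab : ∀ i, Disjoint a (b i)) (hbb : Pairwise fun i j => Disjoint (b i) (b j))
    (σ : Fin k → Bool) :
    (a ∪ Finset.univ.biUnion b).powerset.filter
        (fun β => ∀ i, omegaOf b β i ≤ σ i) =
      (a ∪ (Finset.univ.filter fun i => σ i = true).biUnion b).powerset := by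
  ext β
  simp only [Finset.mem_filter, Finset.mem_powerset]
  constructor
  · rintro ⟨hT, hω⟩
    intro x hx
    rcases Finset.mem_union.mp (hT hx) with hxa | hxb
    · exact Finset.mem_union_left _ hxa
    · obtain ⟨i, -, hxi⟩ := Finset.mem_biUnion.mp hxb
      have hσi : σ i = true := by
        have := hω i
        unfold omegaOf at this
        rw [decide_le_iff] at this
        exact this ⟨x, Finset.mem_inter.mpr ⟨hx, hxi⟩⟩
      exact Finset.mem_union_right _ (Finset.mem_biUnion.mpr
        ⟨i, Finset.mem_filter.mpr ⟨Finset.mem_univ _, hσi⟩, hxi⟩)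
  · intro hsub
    constructor
    · refine hsub.trans (Finset.union_subset_union_right ?_)
      exact Finset.biUnion_subset_biUnion_of_subset_left _ (Finset.filter_subset _ _)
    · intro i
      unfold omegaOf
      rw [decide_le_iff]
      rintro ⟨x, hx⟩
      obtain ⟨hxβ, hxbi⟩ := Finset.mem_inter.mp hx
      rcases Finset.mem_union.mp (hsub hxβ) with hxa | hxb
      · exact absurd hxbi (Finset.disjoint_left.mp (hab i) hxa)
      · obtain ⟨j, hj, hxj⟩ := Finset.mem_biUnion.mp hxb
        rcases eq_or_ne j i with rfl | hne
        · exact (Finset.mem_filter.mp hj).2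
        · exact absurd hxj (Finset.disjoint_right.mp (hbb hne) hxbi)

theorem coeff_cube_fun {k : ℕ} {Gs : ℕ → Subgroup G} (ha : Antitone Gs)
    (g : Finset ℕ → G) (a : Finset ℕ) (b : Fin k → Finset ℕ)
    (hab : ∀ i, Disjoint a (b i)) (hbb : Pairwise fun i j => Disjoint (b i) (b j))
    (hg : ∀ β, β ⊆ a ∪ Finset.univ.biUnion b → g β ∈ Gs β.card) :
    (fun σ : Fin k → Bool =>
      Fc g (a ∪ (Finset.univ.filter fun i => σ i = true).biUnion b)) ∈ HKGroup k Gs := by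
  classical
  have hC : (fun σ : Fin k → Bool =>
      Fc g (a ∪ (Finset.univ.filter fun i => σ i = true).biUnion b)) =
      ((Finset.sort (a ∪ Finset.univ.biUnion b).powerset frel).map
        (fun β => genCube (omegaOf b β) (g β))).prod := by
    funext σ
    rw [pi_prod_apply, List.map_map]
    have hcomp : ((fun f : (Fin k → Bool) → G => f σ) ∘ fun β => genCube (omegaOf b β) (g β)) =
        fun β => if (∀ i, omegaOf b β i ≤ σ i) then g β else 1 := rfl
    rw [hcomp, prod_map_ite, sort_filter, powerset_filter_eq a b hab hbb σ]
    rfl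
  rw [hC]
  refine list_prod_mem ?_
  intro x hx
  rw [List.mem_map] at hx
  obtain ⟨β, hβ, rfl⟩ := hx
  rw [Finset.mem_sort, Finset.mem_powerset] at hβ
  exact genCube_mem' ha (hg β hβ) (weight_omegaOf hbb β)

theorem biUnion_sdiff {k : ℕ} (s : Finset (Fin k)) (t : Fin k → Finset ℕ) (u : Finset ℕ) :
    (s.biUnion t) \ u = s.biUnion (fun i => t i \ u) := by
  ext x
  simp only [Finset.mem_sdiff, Finset.mem_biUnion]
  constructor
  · rintro ⟨⟨i, hi, hx⟩, hnu⟩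
    exact ⟨i, hi, hx, hnu⟩
  · rintro ⟨i, hi, hx, hnu⟩
    exact ⟨⟨i, hi, hx⟩, hnu⟩

theorem biUnion_const_empty {k : ℕ} (s : Finset (Fin k)) :
    s.biUnion (fun _ => (∅ : Finset ℕ)) = ∅ := by
  ext x
  simp

/-- The cube property specialized to constant cubes gives values in `Gs 0`. -/
theorem cube_hyp_value {Gs : ℕ → Subgroup G} (ha : Antitone Gs) {F : Finset ℕ → G}
    (hcp : ∀ k : ℕ, 1 ≤ k → ∀ (a : Finset ℕ) (b : Fin k → Finset ℕ),
      (∀ i, Disjoint a (b i)) → (Pairwise fun i j => Disjoint (b i) (b j)) →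
      (fun σ : Fin k → Bool =>
        F (a ∪ (Finset.univ.filter fun i => σ i = true).biUnion b)) ∈ HKGroup k Gs)
    (α : Finset ℕ) : F α ∈ Gs 0 := by
  have h := hcp 1 le_rfl α (fun _ => ∅) (fun _ => Finset.disjoint_empty_right _)
    (fun i j _ => Finset.disjoint_empty_right _)
  have h2 := coord_mem ha h (fun _ => false)
  simpa [biUnion_const_empty] using h2

/-- Transfer of the cube property to a discrete derivative. -/
theorem cube_hyp_deriv {Gs : ℕ → Subgroup G} (ha : Antitone Gs)
    (hcomm : ∀ i j, ⁅Gs i, Gs j⁆ ≤ Gs (i + j)) {F : Finset ℕ → G} (β : Finset ℕ)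
    (hcp : ∀ k : ℕ, 1 ≤ k → ∀ (a : Finset ℕ) (b : Fin k → Finset ℕ),
      (∀ i, Disjoint a (b i)) → (Pairwise fun i j => Disjoint (b i) (b j)) →
      (fun σ : Fin k → Bool =>
        F (a ∪ (Finset.univ.filter fun i => σ i = true).biUnion b)) ∈ HKGroup k Gs)
    (Df : Finset ℕ → G) (hDf : ∀ α, Df α = (F (α \ β))⁻¹ * F (α ∪ β)) :
    ∀ k : ℕ, 1 ≤ k → ∀ (a : Finset ℕ) (b : Fin k → Finset ℕ),
      (∀ i, Disjoint a (b i)) → (Pairwise fun i j => Disjoint (b i) (b j)) →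
      (fun σ : Fin k → Bool =>
        Df (a ∪ (Finset.univ.filter fun i => σ i = true).biUnion b)) ∈
        HKGroup k (sh Gs) := by
  intro k _ a b hab hbb
  set b'' : Fin (k+1) → Finset ℕ := Fin.snoc (fun i => b i \ β) β with hb''
  have hd1 : ∀ i, Disjoint (a \ β) (b'' i) := by
    intro i
    induction i using Fin.lastCases with
    | last =>
      rw [hb'', Fin.snoc_last]
      exact Finset.sdiff_disjoint
    | cast j =>
      rw [hb'', Fin.snoc_castSucc]
      exact Finset.disjoint_of_subset_left (Finset.sdiff_subset)
        (Finset.disjoint_of_subset_right (Finset.sdiff_subset) (hab j))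
  have hd2 : Pairwise fun i j => Disjoint (b'' i) (b'' j) := by
    intro i j hij
    induction i using Fin.lastCases with
    | last =>
      induction j using Fin.lastCases with
      | last => exact absurd rfl hij
      | cast j' =>
        rw [hb'', Fin.snoc_last, Fin.snoc_castSucc]
        exact Finset.sdiff_disjoint.symm
    | cast i' =>
      induction j using Fin.lastCases with
      | last =>
        rw [hb'', Fin.snoc_last, Fin.snoc_castSucc]
        exact Finset.sdiff_disjoint
      | cast j' =>
        rw [hb'', Fin.snoc_castSucc, Fin.snoc_castSucc]
        have hne : i' ≠ j' := fun h => hij (congrArg Fin.castSucc h)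
        exact Finset.disjoint_of_subset_left (Finset.sdiff_subset)
          (Finset.disjoint_of_subset_right (Finset.sdiff_subset) (hbb hne))
  have hc := hcp (k+1) (by omega) (a \ β) b'' hd1 hd2
  obtain ⟨-, h1⟩ := face_split ha hcomm hc
  have hsets : ∀ ω : Fin k → Bool,
      ((a \ β) ∪ (Finset.univ.filter fun i =>
        (Fin.snoc ω false : Fin (k+1) → Bool) i = true).biUnion b'' =
        (a ∪ (Finset.univ.filter fun i => ω i = true).biUnion b) \ β) ∧
      ((a \ β) ∪ (Finset.univ.filter fun i =>
        (Fin.snoc ω true : Fin (k+1) → Bool) i = true).biUnion b'' =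
        (a ∪ (Finset.univ.filter fun i => ω i = true).biUnion b) ∪ β) := by
    intro ω
    have hsplit0 := biUnion_split (Fin.snoc ω false : Fin (k+1) → Bool) b''
    have hsplit1 := biUnion_split (Fin.snoc ω true : Fin (k+1) → Bool) b''
    simp only [Fin.snoc_castSucc, Fin.snoc_last, hb''] at hsplit0 hsplit1
    rw [if_pos trivial] at hsplit1
    rw [show (if false = true then β else (∅ : Finset ℕ)) = ∅ from rfl] at hsplit0
    have hkey : (a \ β) ∪ (Finset.univ.filter fun j => ω j = true).biUnion
        (fun j => b j \ β) = (a ∪ (Finset.univ.filter fun i => ω i = true).biUnion b) \ β := by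
      rw [Finset.union_sdiff_distrib, biUnion_sdiff]
    constructor
    · rw [hsplit0, Finset.union_empty, hkey]
    · rw [hsplit1, ← Finset.union_assoc, hkey, Finset.sdiff_union_self_eq_union]
  have heq : (fun σ : Fin k → Bool =>
      Df (a ∪ (Finset.univ.filter fun i => σ i = true).biUnion b)) =
      (fun ω : Fin k → Bool =>
        (F ((a \ β) ∪ (Finset.univ.filter fun i =>
          (Fin.snoc ω false : Fin (k+1) → Bool) i = true).biUnion b''))⁻¹ *
        F ((a \ β) ∪ (Finset.univ.filter fun i =>
          (Fin.snoc ω true : Fin (k+1) → Bool) i = true).biUnion b'')) := by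
    funext ω
    rw [hDf, (hsets ω).1, (hsets ω).2]
  rw [heq]
  exact h1

/-- (B1): the cube property over `G` implies polynomiality. -/
theorem cube_to_polyAux : ∀ (d : ℕ) (Gs : ℕ → Subgroup G), Antitone Gs →
    (∀ i j, ⁅Gs i, Gs j⁆ ≤ Gs (i + j)) → Gs (d+1) = ⊥ → ∀ F : Finset ℕ → G,
    (∀ k : ℕ, 1 ≤ k → ∀ (a : Finset ℕ) (b : Fin k → Finset ℕ),
      (∀ i, Disjoint a (b i)) → (Pairwise fun i j => Disjoint (b i) (b j)) →
      (fun σ : Fin k → Bool =>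
        F (a ∪ (Finset.univ.filter fun i => σ i = true).biUnion b)) ∈ HKGroup k Gs) →
    PolyAux (d+1) Gs F := by
  intro d
  induction d with
  | zero =>
    intro Gs ha hcomm hlen F hcp
    refine ⟨cube_hyp_value ha hcp, ?_⟩
    intro β hβ
    refine ⟨fun α => (F (α \ β))⁻¹ * F (α ∪ β), ⟨hlen, ?_⟩, ?_⟩
    · intro α
      have h := cube_hyp_deriv ha hcomm β hcp (fun α => (F (α \ β))⁻¹ * F (α ∪ β))
        (fun _ => rfl) 1 le_rfl α (fun _ => ∅) (fun _ => Finset.disjoint_empty_right _)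
        (fun i j _ => Finset.disjoint_empty_right _)
      have h2 := coord_mem (sh_anti ha) h (fun _ => false)
      have hb : sh Gs 0 = ⊥ := hlen
      rw [hb] at h2
      simpa [biUnion_const_empty] using h2
    · intro α hd
      dsimp only
      rw [Finset.sdiff_eq_self_of_disjoint hd]
  | succ d ih =>
    intro Gs ha hcomm hlen F hcp
    refine ⟨cube_hyp_value ha hcp, ?_⟩
    intro β hβ
    refine ⟨fun α => (F (α \ β))⁻¹ * F (α ∪ β), ?_, ?_⟩
    · exact ih (sh Gs) (sh_anti ha) (sh_comm ha hcomm) hlen _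
        (cube_hyp_deriv ha hcomm β hcp (fun α => (F (α \ β))⁻¹ * F (α ∪ β)) (fun _ => rfl))
    · intro α hd
      dsimp only
      rw [Finset.sdiff_eq_self_of_disjoint hd]

open Classical in
/-- Taylor coefficients of a lift of `f`, defined by strong recursion. -/
noncomputable def coeffs (Gs : ℕ → Subgroup G) (Γ : Subgroup G) (f : Finset ℕ → G ⧸ Γ)
    (α : Finset ℕ) : G :=
  if h : ∃ t : G, t ∈ Gs α.card ∧ f α = QuotientGroup.mk
      (((Finset.sort (α.powerset.erase α) frel).attach.map
        (fun β => coeffs Gs Γ f β.1)).prod * t)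
  then h.choose else 1
termination_by α.card
decreasing_by
  all_goals
    (have hm := β.2
     rw [Finset.mem_sort] at hm
     obtain ⟨hne2, hmem2⟩ := Finset.mem_erase.mp hm
     exact Finset.card_lt_card (lt_of_le_of_ne (Finset.mem_powerset.mp hmem2) hne2))

theorem coeffs_spec {Gs : ℕ → Subgroup G} {Γ : Subgroup G} (ha : Antitone Gs)
    (hcomm : ∀ i j, ⁅Gs i, Gs j⁆ ≤ Gs (i + j)) (hfil1 : Gs 1 = ⊤)
    {f : Finset ℕ → G ⧸ Γ}
    (hf : ∀ k : ℕ, 1 ≤ k → ∀ A : (Fin k → Bool) → Finset ℕ, IsParallelepiped k A →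
      ∃ c ∈ HKGroup k Gs, ∀ ω : Fin k → Bool, f (A ω) = QuotientGroup.mk (c ω)) :
    ∀ α : Finset ℕ, coeffs Gs Γ f α ∈ Gs α.card ∧
      f α = QuotientGroup.mk (Fc (coeffs Gs Γ f) α) := by
  classical
  intro α
  induction α using Finset.strongInduction with
  | _ α ih =>
  have hex : ∃ t : G, t ∈ Gs α.card ∧ f α = QuotientGroup.mk
      (((Finset.sort (α.powerset.erase α) frel).map (coeffs Gs Γ f)).prod * t) := by
    rcases Finset.eq_empty_or_nonempty α with rfl | hne
    · obtain ⟨c, hcHK, hfc⟩ := hf 1 le_rfl (fun _ => (∅ : Finset ℕ))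
        ⟨∅, fun _ => ∅, fun _ => Finset.disjoint_empty_right _,
          fun i j _ => Finset.disjoint_empty_right _,
          fun ω => by simp [biUnion_const_empty]⟩
      refine ⟨c (fun _ => false), ?_, ?_⟩
      · have := coord_mem ha hcHK (fun _ => false)
        simpa using this
      · have h1 := hfc (fun _ => false)
        have h2 : Finset.sort ((∅ : Finset ℕ).powerset.erase ∅) frel = [] := by
          rw [Finset.powerset_empty, Finset.erase_singleton, Finset.sort_empty]
        rw [h2]
        simpa using h1
    · set m := α.card with hm
      have hm1 : 1 ≤ m := Finset.card_pos.mpr hne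
      set l := Finset.sort α (· ≤ ·) with hldef
      have hl : l.length = m := Finset.length_sort _
      set b : Fin m → Finset ℕ := fun i => {l.get (Fin.cast hl.symm i)} with hbdef
      have hgetmem : ∀ i : Fin m, l.get (Fin.cast hl.symm i) ∈ α := fun i =>
        (Finset.mem_sort _).mp (List.get_mem l (Fin.cast hl.symm i))
      have hgetinj : Function.Injective l.get :=
        List.nodup_iff_injective_get.mp (Finset.sort_nodup _ _)
      have hbinj : ∀ i j : Fin m, l.get (Fin.cast hl.symm i) = l.get (Fin.cast hl.symm j) →
          i = j := by
        intro i j h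
        have h2 := hgetinj h
        have h3 : (Fin.cast hl.symm i).val = (Fin.cast hl.symm j).val := congrArg Fin.val h2
        exact Fin.ext h3
      have hbb : Pairwise fun i j : Fin m => Disjoint (b i) (b j) := by
        intro i j hij
        rw [hbdef]
        rw [Finset.disjoint_singleton]
        exact fun h => hij (hbinj i j h)
      have hab : ∀ i, Disjoint (∅ : Finset ℕ) (b i) := fun i => Finset.disjoint_empty_left _
      obtain ⟨c, hcHK, hfc⟩ := hf m hm1
        (fun σ => ∅ ∪ (Finset.univ.filter fun i => σ i = true).biUnion b)
        ⟨∅, b, hab, hbb, fun ω => rfl⟩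
      have hA_sub : ∀ σ : Fin m → Bool,
          (∅ ∪ (Finset.univ.filter fun i => σ i = true).biUnion b) ⊆ α := by
        intro σ x hx
        rcases Finset.mem_union.mp hx with h | h
        · exact absurd h (Finset.notMem_empty x)
        · obtain ⟨i, -, hxi⟩ := Finset.mem_biUnion.mp h
          rw [hbdef, Finset.mem_singleton] at hxi
          rw [hxi]
          exact hgetmem i
      have hA_top : (∅ ∪ (Finset.univ.filter fun i =>
          (fun _ : Fin m => true) i = true).biUnion b) = α := by
        refine le_antisymm (hA_sub _) ?_
        intro x hx
        have hxl : x ∈ l := (Finset.mem_sort _).mpr hx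
        obtain ⟨n, hn⟩ := List.mem_iff_get.mp hxl
        refine Finset.mem_union_right _ (Finset.mem_biUnion.mpr
          ⟨Fin.cast hl n, Finset.mem_filter.mpr ⟨Finset.mem_univ _, rfl⟩, ?_⟩)
        rw [hbdef, Finset.mem_singleton]
        exact hn.symm
      have hA_ne : ∀ σ : Fin m → Bool, σ ≠ (fun _ => true) →
          (∅ ∪ (Finset.univ.filter fun i => σ i = true).biUnion b) ≠ α := by
        intro σ hσ hAeq
        have hex2 : ∃ i, σ i ≠ true := by
          by_contra hcon
          push_neg at hcon
          exact hσ (funext fun i => hcon i)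
        obtain ⟨i, hi⟩ := hex2
        have hxα : l.get (Fin.cast hl.symm i) ∈ α := hgetmem i
        rw [← hAeq] at hxα
        rcases Finset.mem_union.mp hxα with h | h
        · exact absurd h (Finset.notMem_empty _)
        · obtain ⟨j, hj, hxj⟩ := Finset.mem_biUnion.mp h
          rw [hbdef, Finset.mem_singleton] at hxj
          have := hbinj i j hxj
          subst this
          exact hi (Finset.mem_filter.mp hj).2
      have hA_ssub : ∀ σ : Fin m → Bool, σ ≠ (fun _ => true) →
          (∅ ∪ (Finset.univ.filter fun i => σ i = true).biUnion b) ⊂ α := fun σ hσ =>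
        lt_of_le_of_ne (hA_sub σ) (hA_ne σ hσ)
      set g' : Finset ℕ → G := fun β => if β = α then 1 else coeffs Gs Γ f β with hg'def
      have hT : (∅ ∪ Finset.univ.biUnion b) = α := by
        rw [← hA_top]
        congr 1
        congr 1
        exact (Finset.filter_true_of_mem (fun x _ => rfl)).symm
      have hg' : ∀ β, β ⊆ ∅ ∪ Finset.univ.biUnion b → g' β ∈ Gs β.card := by
        intro β hβ
        show (if β = α then 1 else coeffs Gs Γ f β) ∈ Gs β.card
        by_cases hba : β = α
        · rw [if_pos hba]; exact one_mem _
        · rw [if_neg hba]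
          rw [hT] at hβ
          exact (ih β (lt_of_le_of_ne hβ hba)).1
      have hX := coeff_cube_fun ha g' ∅ b hab hbb hg'
      have hy : (fun σ : Fin m → Bool =>
          Fc g' (∅ ∪ (Finset.univ.filter fun i => σ i = true).biUnion b))⁻¹ * c ∈
          HKGroup m Gs := mul_mem (inv_mem hX) hcHK
      have hcorners : ∀ σ : Fin m → Bool, σ ≠ (fun _ => true) →
          ((fun σ : Fin m → Bool =>
            Fc g' (∅ ∪ (Finset.univ.filter fun i => σ i = true).biUnion b))⁻¹ * c) σ ∈ Γ := by
        intro σ hσ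
        have h1 : Fc g' (∅ ∪ (Finset.univ.filter fun i => σ i = true).biUnion b) =
            Fc (coeffs Gs Γ f) (∅ ∪ (Finset.univ.filter fun i => σ i = true).biUnion b) := by
          refine Fc_congr fun β hβ => ?_
          show (if β = α then 1 else coeffs Gs Γ f β) = coeffs Gs Γ f β
          rw [if_neg]
          intro hba
          subst hba
          exact hA_ne σ hσ (le_antisymm (hA_sub σ) hβ)
        have h2 := (ih _ (hA_ssub σ hσ)).2
        have h3 := hfc σ
        show (Fc g' (∅ ∪ (Finset.univ.filter fun i => σ i = true).biUnion b))⁻¹ * c σ ∈ Γ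
        rw [h1]
        rw [h2] at h3
        exact QuotientGroup.eq.mp h3
      obtain ⟨γ, hγ, s, hs, htop⟩ := corner m Gs ha hcomm _ hy hcorners
      have htop' : (Fc g' (∅ ∪ (Finset.univ.filter fun i =>
          (fun _ : Fin m => true) i = true).biUnion b))⁻¹ * c (fun _ => true) = γ * s := htop
      have hXtop : Fc g' (∅ ∪ (Finset.univ.filter fun i =>
          (fun _ : Fin m => true) i = true).biUnion b) =
          ((Finset.sort (α.powerset.erase α) frel).map (coeffs Gs Γ f)).prod := by
        rw [hA_top, Fc_erase]
        have hgα : g' α = 1 := by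
          show (if α = α then 1 else coeffs Gs Γ f α) = 1
          rw [if_pos rfl]
        rw [hgα, mul_one]
        have hmapeq : List.map g' (Finset.sort (α.powerset.erase α) frel) =
            List.map (coeffs Gs Γ f) (Finset.sort (α.powerset.erase α) frel) := by
          refine List.map_congr_left fun β hβ => ?_
          rw [Finset.mem_sort] at hβ
          have hba : β ≠ α := (Finset.mem_erase.mp hβ).1
          show (if β = α then 1 else coeffs Gs Γ f β) = coeffs Gs Γ f β
          rw [if_neg hba]
        rw [hmapeq]
      have hγ1 : γ ∈ Gs 1 := by rw [hfil1]; exact Subgroup.mem_top γ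
      have hcommel : ⁅γ, s⁆ ∈ Gs (1 + m) :=
        hcomm 1 m (Subgroup.commutator_mem_commutator hγ1 hs)
      have ht : γ * s * γ⁻¹ ∈ Gs m := by
        have heq2 : γ * s * γ⁻¹ = ⁅γ, s⁆ * s := by group
        rw [heq2]
        exact mul_mem (ha (by omega) hcommel) hs
      refine ⟨γ * s * γ⁻¹, ht, ?_⟩
      have hfα : f α = QuotientGroup.mk (c (fun _ => true)) := by
        have h6 := hfc (fun _ => true)
        rwa [hA_top] at h6
      have hc_top : c (fun _ => true) =
          (((Finset.sort (α.powerset.erase α) frel).map (coeffs Gs Γ f)).prod *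
            (γ * s * γ⁻¹)) * γ := by
        have h5 : c (fun _ => true) = Fc g' (∅ ∪ (Finset.univ.filter fun i =>
            (fun _ : Fin m => true) i = true).biUnion b) * (γ * s) := by
          rw [← htop']
          group
        rw [h5, hXtop]
        group
      rw [hfα, hc_top]
      exact QuotientGroup.mk_mul_of_mem _ hγ
  have hattach : ((Finset.sort (α.powerset.erase α) frel).attach.map
      (fun β => coeffs Gs Γ f β.1)).prod =
      ((Finset.sort (α.powerset.erase α) frel).map (coeffs Gs Γ f)).prod := by
    rw [List.attach_map_val]
  have hex' : ∃ t : G, t ∈ Gs α.card ∧ f α = QuotientGroup.mk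
      (((Finset.sort (α.powerset.erase α) frel).attach.map
        (fun β => coeffs Gs Γ f β.1)).prod * t) := by
    rw [hattach]
    exact hex
  have hval : coeffs Gs Γ f α = hex'.choose := by
    rw [coeffs]
    rw [dif_pos hex']
  constructor
  · rw [hval]
    exact hex'.choose_spec.1
  · rw [Fc_erase, hval, ← hattach]
    exact hex'.choose_spec.2

end S6

variable {E : Type*} [NormedAddCommGroup E] [NormedSpace ℝ E] [FiniteDimensional ℝ E]
  {G : Type*} [TopologicalSpace G] [ChartedSpace E G] [Group G] [IsTopologicalGroup G]
  [LieGroup (modelWithCornersSelf ℝ E) (⊤ : ℕ∞) G] [Group.IsNilpotent G]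

/-- With `G_•` a `Γ`-rational filtration of length `d` as above, a map
`f : 𝓕∅ → G/Γ` is polynomial iff for every `k ≥ 1` and every parallelepiped
`(α_ω)_{ω ∈ {0,1}^k}`, the cube `(f(α_ω))_ω` lies in the image of `HK^k(G_•)` under the
coordinatewise projection `G^{{0,1}^k} → (G/Γ)^{{0,1}^k}`. -/
theorem statement6
    (d : ℕ) (Gs : ℕ → Subgroup G)
    (hanti : Antitone Gs) (hclosed : ∀ i, IsClosed (Gs i : Set G))
    (hcomm : ∀ i j, ⁅Gs i, Gs j⁆ ≤ Gs (i + j))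
    (hfil0 : Gs 0 = ⊤) (hfil1 : Gs 1 = ⊤) (hlen : Gs (d + 1) = ⊥)
    (Γ : Subgroup G) [DiscreteTopology Γ] (hcocompact : CompactSpace (G ⧸ Γ))
    (hrat : ∀ i, CompactSpace (↥(Gs i) ⧸ Γ.subgroupOf (Gs i)))
    (f : Finset ℕ → G ⧸ Γ) :
    IsPolyQuot Gs Γ f ↔
      ∀ k : ℕ, 1 ≤ k → ∀ A : (Fin k → Bool) → Finset ℕ, IsParallelepiped k A →
        ∃ c ∈ HKGroup k Gs, ∀ ω : Fin k → Bool, f (A ω) = QuotientGroup.mk (c ω) := by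
  constructor
  · rintro ⟨g, hpoly, hq⟩ k hk A hA
    obtain ⟨a, b, hab, hbb, hAeq⟩ := hA
    refine ⟨fun ω => g (A ω), ?_, fun ω => hq (A ω)⟩
    have hmem := S6.poly_cube_mem k Gs hanti g hpoly a b hab hbb
    have he : (fun ω : Fin k → Bool => g (A ω)) =
        (fun ω => g (a ∪ (Finset.univ.filter fun i => ω i = true).biUnion b)) := by
      funext ω
      rw [hAeq ω]
    rw [he]
    exact hmem
  · intro hf
    have hspec := S6.coeffs_spec hanti hcomm hfil1 hf
    refine ⟨S6.Fc (S6.coeffs Gs Γ f), ⟨d + 1, ?_⟩, fun α => (hspec α).2⟩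
    refine S6.cube_to_polyAux d Gs hanti hcomm hlen _ ?_
    intro k hk a b hab hbb
    exact S6.coeff_cube_fun hanti (S6.coeffs Gs Γ f) a b hab hbb (fun β _ => (hspec β).1)
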